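/- Let (V, E, V_□, V_◇, w) be a finite arena with integer payoffs w : E → ℤ, let w_max = max_{e ∈ E} |w(e)|, and let ℓ' = |V|·(|V|·w_max + 1). Then every vertex of the arena is sure-winning for DirBWMP(0) if and only if every vertex of the arena is sure-winning for DirFWMP(ℓ', 0). -/

import Mathlib

open scoped Classical

/-- A finite arena with integer payoffs: a deadlock-free edge relation `E`, a
set `P1` of Player-1 vertices (the probabilistic vertices `V_◇` form the
complement of `P1`), and an integer payoff `w` on edges. -/
structure ArenaZ (V : Type*) where
  E : V → V → Prop
  P1 : Set V
  w : V → V → ℤ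
  nodeadlock : ∀ v : V, ∃ u : V, E v u

/-- A play is an infinite `E`-path. -/
def ArenaZ.IsPlay {V : Type*} (A : ArenaZ V) (π : ℕ → V) : Prop :=
  ∀ n : ℕ, A.E (π n) (π (n + 1))

/-- A strategy for Player 1: given the history (the strict prefix `v_0 … v_{n-1}`
of the current play) and the current vertex `v_n`, if `v_n` belongs to Player 1
then the strategy picks an out-neighbour of `v_n`. -/
structure ArenaZ.Strategy {V : Type*} (A : ArenaZ V) where
  act : List V → V → V
  legal : ∀ (h : List V) (v : V), v ∈ A.P1 → A.E v (act h v)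

/-- `π` is an outcome of strategy `σ` from `v`. -/
def ArenaZ.IsOutcome {V : Type*} (A : ArenaZ V) (σ : A.Strategy) (v : V) (π : ℕ → V) : Prop :=
  π 0 = v ∧ A.IsPlay π ∧
    ∀ n : ℕ, π n ∈ A.P1 → π (n + 1) = σ.act (List.ofFn fun i : Fin n => π i) (π n)

/-- Player 1 sure-wins objective `Φ` from `v`: some strategy has all of its
outcomes from `v` inside `Φ`. -/
def ArenaZ.SureWins {V : Type*} (A : ArenaZ V) (Φ : Set (ℕ → V)) (v : V) : Prop :=
  ∃ σ : A.Strategy, ∀ π : ℕ → V, A.IsOutcome σ v π → π ∈ Φ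

/-- Total payoff of the window of length `d` starting at position `i` of play `π`. -/
def ArenaZ.winSum {V : Type*} (A : ArenaZ V) (π : ℕ → V) (i d : ℕ) : ℤ :=
  ∑ k ∈ Finset.range d, A.w (π (i + k)) (π (i + k + 1))

/-- `π` satisfies `DirFWMP(ℓ, λ)`: every `λ`-window closes within `ℓ` steps. -/
def ArenaZ.DirFWMP {V : Type*} (A : ArenaZ V) (ℓ : ℕ) (lam : ℤ) (π : ℕ → V) : Prop :=
  ∀ i : ℕ, ∃ d : ℕ, 1 ≤ d ∧ d ≤ ℓ ∧ lam * (d : ℤ) ≤ A.winSum π i d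

/-- `π` satisfies `DirBWMP(λ)`: it satisfies `DirFWMP(ℓ, λ)` for some `ℓ ≥ 1`. -/
def ArenaZ.DirBWMP {V : Type*} (A : ArenaZ V) (lam : ℤ) (π : ℕ → V) : Prop :=
  ∃ ℓ : ℕ, 1 ≤ ℓ ∧ A.DirFWMP ℓ lam π

/-- `W_λ = max_{e ∈ E} |w(e) − λ|`, the maximum absolute deviation of an edge
payoff from `λ` (for `λ = 0` this is the maximum absolute payoff `w_max`). -/
noncomputable def ArenaZ.maxDev {V : Type*} [Fintype V] (A : ArenaZ V) (lam : ℤ) : ℕ :=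
  Finset.univ.sup fun e : V × V => if A.E e.1 e.2 then (A.w e.1 e.2 - lam).natAbs else 0

namespace WindowAux

variable {V : Type*}

/-- Player 1 can force, within `t` steps from `v`, that some prefix sum of
edge weights is `≥ c` (at P1 vertices she chooses, elsewhere all moves work). -/
def Win (A : ArenaZ V) : ℕ → ℤ → V → Prop
  | 0, _, _ => False
  | t+1, c, v =>
      (v ∈ A.P1 → ∃ u, A.E v u ∧ (c ≤ A.w v u ∨ Win A t (c - A.w v u) u)) ∧
      (v ∉ A.P1 → ∀ u, A.E v u → (c ≤ A.w v u ∨ Win A t (c - A.w v u) u))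

theorem win_pos {A : ArenaZ V} {t : ℕ} {c : ℤ} {v : V} (h : Win A t c v) : 0 < t := by
  cases t with
  | zero => exact absurd h (by simp [Win])
  | succ t => exact Nat.succ_pos t

theorem win_mono {A : ArenaZ V} : ∀ {t t' : ℕ} {c : ℤ} {v : V}, t ≤ t' →
    Win A t c v → Win A t' c v := by
  intro t
  induction t with
  | zero => intro t' c v _ h; exact absurd h (by simp [Win])
  | succ t ih =>
    intro t' c v htt h
    obtain ⟨t', rfl⟩ : ∃ s, t' = s + 1 := ⟨t' - 1, by omega⟩
    obtain ⟨h1, h2⟩ := h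
    refine ⟨fun hp => ?_, fun hp u hu => ?_⟩
    · obtain ⟨u, hu, hc⟩ := h1 hp
      exact ⟨u, hu, hc.imp id (ih (by omega))⟩
    · exact (h2 hp u hu).imp id (ih (by omega))

theorem win_anti {A : ArenaZ V} : ∀ {t : ℕ} {c c' : ℤ} {v : V}, c' ≤ c →
    Win A t c v → Win A t c' v := by
  intro t
  induction t with
  | zero => intro c c' v _ h; exact absurd h (by simp [Win])
  | succ t ih =>
    intro c c' v hcc h
    obtain ⟨h1, h2⟩ := h
    refine ⟨fun hp => ?_, fun hp u hu => ?_⟩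
    · obtain ⟨u, hu, hc⟩ := h1 hp
      exact ⟨u, hu, hc.imp (le_trans hcc) (fun hw => ih (by omega) hw)⟩
    · exact (h2 hp u hu).imp (le_trans hcc) (fun hw => ih (by omega) hw)

end WindowAux
namespace WindowAux

variable {V : Type*}

/-- minimal horizon. -/
noncomputable def minWin (A : ArenaZ V) (u : V) (c : ℤ) : ℕ :=
  if h : ∃ t, Win A t c u then Nat.find h else 0

theorem minWin_spec {A : ArenaZ V} {u : V} {c : ℤ} (h : ∃ t, Win A t c u) :
    Win A (minWin A u c) c u := by
  rw [minWin, dif_pos h]; exact Nat.find_spec h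

theorem minWin_le {A : ArenaZ V} {u : V} {c : ℤ} {s : ℕ} (h : Win A s c u) :
    minWin A u c ≤ s := by
  rw [minWin, dif_pos ⟨s, h⟩]; exact Nat.find_le h

theorem minWin_pos {A : ArenaZ V} {u : V} {c : ℤ} (h : ∃ t, Win A t c u) :
    1 ≤ minWin A u c := win_pos (minWin_spec h)

def stepProp (A : ArenaZ V) (q : V × ℤ) (u' : V) : Prop :=
  A.E q.1 u' ∧ A.w q.1 u' < q.2 ∧ (∃ t, Win A t (q.2 - A.w q.1 u') u') ∧
    minWin A u' (q.2 - A.w q.1 u') + 1 = minWin A q.1 q.2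

theorem exists_step {A : ArenaZ V} {q : V × ℤ} (h : ∃ t, Win A t q.2 q.1)
    (h2 : 2 ≤ minWin A q.1 q.2) : ∃ u', stepProp A q u' := by
  obtain ⟨u, c⟩ := q
  simp only [stepProp] at h h2 ⊢
  obtain ⟨s, hs⟩ : ∃ s, minWin A u c = s + 2 := ⟨minWin A u c - 2, by omega⟩
  have hw : Win A (s + 2) c u := hs ▸ minWin_spec h
  have hnot1 : ¬ Win A 1 c u := fun hw1 => by have := minWin_le hw1; omega
  obtain ⟨hw1, hw2⟩ := hw
  by_cases hp : u ∈ A.P1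
  · obtain ⟨u', hE, hor⟩ := hw1 hp
    have hwlt : A.w u u' < c := by
      by_contra hge
      exact hnot1 ⟨fun _ => ⟨u', hE, Or.inl (by omega)⟩, fun hnp => absurd hp hnp⟩
    have hwin' : Win A (s + 1) (c - A.w u u') u' := by
      rcases hor with hle | hwin'
      · omega
      · exact hwin'
    refine ⟨u', hE, hwlt, ⟨s + 1, hwin'⟩, ?_⟩
    have hle : minWin A u' (c - A.w u u') ≤ s + 1 := minWin_le hwin'
    have hge : s + 2 ≤ minWin A u' (c - A.w u u') + 1 := by
      rw [← hs]
      refine le_trans (minWin_le (c := c) (u := u) ?_) (le_refl _)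
      exact ⟨fun _ => ⟨u', hE, Or.inr (minWin_spec ⟨s + 1, hwin'⟩)⟩, fun hnp => absurd hp hnp⟩
    omega
  · -- adversary vertex
    have hall : ∀ u', A.E u u' → c ≤ A.w u u' ∨ Win A (s + 1) (c - A.w u u') u' := hw2 hp
    -- there is an edge with weight < c
    have hex : ∃ u', A.E u u' ∧ A.w u u' < c := by
      by_contra hno
      push_neg at hno
      exact hnot1 ⟨fun hp' => absurd hp' hp, fun _ u' hE => Or.inl (hno u' hE)⟩
    -- some edge with w < c has minWin exactly s+1
    by_contra hnostep
    push_neg at hnostep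
    have hkey : ∀ u', A.E u u' → c ≤ A.w u u' ∨ Win A s (c - A.w u u') u' := by
      intro u' hE
      rcases le_or_gt c (A.w u u') with hle | hwlt
      · exact Or.inl hle
      · rcases hall u' hE with hle | hwin'
        · exact absurd hle (not_le.mpr hwlt)
        right
        have hne := hnostep u'
        simp only [hs] at hne
        have hle' : minWin A u' (c - A.w u u') ≤ s + 1 := minWin_le hwin'
        have : minWin A u' (c - A.w u u') ≤ s := by
          by_contra hgt
          exact hne hE hwlt ⟨s + 1, hwin'⟩ (by omega)
        exact win_mono this (minWin_spec ⟨s + 1, hwin'⟩)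
    have : Win A (s + 1) c u := ⟨fun hp' => absurd hp' hp, fun _ => hkey⟩
    have := minWin_le this
    omega

noncomputable def pstep (A : ArenaZ V) (q : V × ℤ) : V × ℤ :=
  if h : ∃ u', stepProp A q u' then (h.choose, q.2 - A.w q.1 h.choose) else q

theorem pstep_spec {A : ArenaZ V} {q : V × ℤ} (h : ∃ u', stepProp A q u') :
    stepProp A q (pstep A q).1 ∧ (pstep A q).2 = q.2 - A.w q.1 (pstep A q).1 := by
  rw [pstep, dif_pos h]; exact ⟨h.choose_spec, rfl⟩

end WindowAux
namespace WindowAux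

variable {V : Type*}

theorem natAbs_w_le [Fintype V] {A : ArenaZ V} {u u' : V} (h : A.E u u') :
    (A.w u u').natAbs ≤ A.maxDev 0 := by
  have := Finset.le_sup (b := (u, u'))
    (f := fun e : V × V => if A.E e.1 e.2 then (A.w e.1 e.2 - 0).natAbs else 0)
    (Finset.mem_univ (u, u'))
  simpa [h, ArenaZ.maxDev] using this

theorem win_bound [Fintype V] [Nonempty V] (A : ArenaZ V) {v : V}
    (h : ∃ t, Win A t 0 v) :
    Win A (Fintype.card V * (Fintype.card V * A.maxDev 0 + 1)) 0 v := by
  classical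
  set K := Fintype.card V with hK
  set W := A.maxDev 0 with hW
  set N := K * (K * W + 1) with hN
  set T := minWin A v 0 with hT
  by_cases hTN : T ≤ N
  · exact win_mono hTN (minWin_spec h)
  push_neg at hTN
  exfalso
  set p : ℕ → V × ℤ := fun n => (pstep A)^[n] (v, 0) with hp
  have hp0 : p 0 = (v, 0) := rfl
  have hpsucc : ∀ n, p (n + 1) = pstep A (p n) := by
    intro n; simp only [hp, Function.iterate_succ_apply']
  -- basic invariant along the optimal path
  have inv : ∀ n, n + 1 ≤ T →
      (∃ t, Win A t (p n).2 (p n).1) ∧ minWin A (p n).1 (p n).2 = T - n ∧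
        (1 ≤ n → 0 < (p n).2) := by
    intro n
    induction n with
    | zero =>
      intro _
      refine ⟨by rw [hp0]; exact h, by rw [hp0, ← hT]; omega, by omega⟩
    | succ n ih =>
      intro hn
      have hn' : n + 1 ≤ T := by omega
      obtain ⟨hex, hmin, _⟩ := ih hn'
      have h2 : 2 ≤ minWin A (p n).1 (p n).2 := by omega
      have hstep := pstep_spec (exists_step hex h2)
      rw [← hpsucc n] at hstep
      obtain ⟨⟨hE, hwlt, hex', hmin'⟩, hc⟩ := hstep
      refine ⟨by rw [hc]; exact hex', ?_, fun _ => by rw [hc]; omega⟩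
      rw [hc]
      omega
  -- strict decrease of the credit on revisits
  have F2 : ∀ m n, m < n → n + 1 ≤ T → (p m).1 = (p n).1 → (p n).2 < (p m).2 := by
    intro m n hmn hn heq
    by_contra hge
    push_neg at hge
    have hwn : Win A (T - n) (p n).2 (p n).1 := by
      have := minWin_spec (inv n hn).1
      rwa [(inv n hn).2.1] at this
    have hwm : Win A (T - n) (p m).2 (p m).1 := heq ▸ win_anti hge hwn
    have hle := minWin_le hwm
    rw [(inv m (by omega)).2.1] at hle
    omega
  -- credits stay bounded by (#visited vertices) * W
  set S : ℕ → Finset V := fun n => (Finset.range (n + 1)).image (fun i => (p i).1) with hS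
  have hScard : ∀ n, (S n).card ≤ K := fun n => (Finset.card_le_card (Finset.subset_univ _)).trans_eq (by rw [hK, Finset.card_univ])
  have cap : ∀ n, n + 1 ≤ T → (p n).2 ≤ ((S n).card * W : ℕ) := by
    intro n
    induction n using Nat.strong_induction_on with
    | _ n ihs =>
      match n with
      | 0 =>
        intro _
        rw [hp0]
        exact Int.natCast_nonneg _
      | (n+1) =>
        intro hn
        have hn' : n + 1 ≤ T := by omega
        by_cases hmem : (p (n + 1)).1 ∈ S n
        · obtain ⟨i, hi, heq⟩ := Finset.mem_image.mp hmem
          rw [Finset.mem_range] at hi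
          have hlt := F2 i (n + 1) (by omega) hn heq
          have hcapi := ihs i (by omega) (by omega)
          have hsub : S i ⊆ S (n + 1) := Finset.image_subset_image (by
            intro x hx; rw [Finset.mem_range] at hx ⊢; omega)
          have hcard : (S i).card ≤ (S (n + 1)).card := Finset.card_le_card hsub
          have : ((S i).card * W : ℕ) ≤ ((S (n + 1)).card * W : ℕ) :=
            Nat.mul_le_mul_right W hcard
          have := Int.ofNat_le.mpr this
          omega
        · -- new vertex
          have h2 : 2 ≤ minWin A (p n).1 (p n).2 := by rw [(inv n hn').2.1]; omega
          have hstep := pstep_spec (exists_step (inv n hn').1 h2)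
          rw [← hpsucc n] at hstep
          obtain ⟨⟨hE, hwlt, _, _⟩, hc⟩ := hstep
          have hwb := natAbs_w_le hE
          have hcapn := ihs n (by omega) hn'
          have hins : S (n + 1) = insert (p (n + 1)).1 (S n) := by
            rw [hS]
            simp only []
            rw [Finset.range_add_one, Finset.image_insert]
          have hcard : (S (n + 1)).card = (S n).card + 1 := by
            rw [hins, Finset.card_insert_of_notMem hmem]
          have hmul : ((S (n + 1)).card * W : ℕ) = ((S n).card * W : ℕ) + W := by
            rw [hcard, Nat.succ_mul]
          have hmul' : (((S (n + 1)).card * W : ℕ) : ℤ) = (((S n).card * W : ℕ) : ℤ) + (W : ℤ) := by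
            rw [hmul]; push_cast; ring
          omega
  -- injectivity and counting
  have hmaps : ∀ n ∈ Finset.Icc 1 (T - 1),
      p n ∈ (Finset.univ : Finset V) ×ˢ Finset.Icc (1 : ℤ) ((K * W : ℕ) : ℤ) := by
    intro n hn
    rw [Finset.mem_Icc] at hn
    rw [Finset.mem_product, Finset.mem_Icc]
    have hn' : n + 1 ≤ T := by omega
    have hpos := (inv n hn').2.2 hn.1
    have hcap := cap n hn'
    have hcb : ((S n).card * W : ℕ) ≤ (K * W : ℕ) := Nat.mul_le_mul_right W (hScard n)
    have := Int.ofNat_le.mpr hcb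
    exact ⟨Finset.mem_univ _, by omega, by omega⟩
  have hinj : Set.InjOn p (Finset.Icc 1 (T - 1)) := by
    intro m hm n hn heq
    simp only [Finset.coe_Icc, Set.mem_Icc] at hm hn
    by_contra hne
    rcases Nat.lt_or_ge m n with hlt | hge
    · have := F2 m n hlt (by omega) (congrArg Prod.fst heq)
      rw [heq] at this; omega
    · have hlt : n < m := by omega
      have := F2 n m hlt (by omega) (congrArg Prod.fst heq.symm)
      rw [heq] at this; omega
  have hcount := Finset.card_le_card_of_injOn p hmaps hinj
  rw [Nat.card_Icc, Finset.card_product, Finset.card_univ, Int.card_Icc] at hcount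
  have hIcc : ((K * W : ℕ) : ℤ) + 1 - 1 = ((K * W : ℕ) : ℤ) := by ring
  rw [hIcc, Int.toNat_natCast, ← hK] at hcount
  -- hcount : T - 1 + 1 - 1 ≤ K * (K * W)
  have hK1 : 1 ≤ K := Fintype.card_pos
  have hNe : N = K * (K * W) + K := by rw [hN]; ring
  set M := K * (K * W) with hM
  omega

end WindowAux
namespace WindowAux

variable {V : Type*}

theorem p1_step {A : ArenaZ V} {u : V} {c : ℤ} (hp : u ∈ A.P1)
    (hn : ∀ t, ¬ Win A t c u) {u' : V} (hE : A.E u u') :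
    A.w u u' < c ∧ ∀ t, ¬ Win A t (c - A.w u u') u' := by
  constructor
  · by_contra hge
    push_neg at hge
    exact hn 1 ⟨fun _ => ⟨u', hE, Or.inl hge⟩, fun h => absurd hp h⟩
  · intro t hw
    exact hn (t + 1) ⟨fun _ => ⟨u', hE, Or.inr hw⟩, fun h => absurd hp h⟩

theorem adv_step [Fintype V] {A : ArenaZ V} {u : V} {c : ℤ} (hp : u ∉ A.P1)
    (hn : ∀ t, ¬ Win A t c u) :
    ∃ u', A.E u u' ∧ A.w u u' < c ∧ ∀ t, ¬ Win A t (c - A.w u u') u' := by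
  by_contra hno
  push_neg at hno
  apply hn (Finset.univ.sup (fun u' : V => minWin A u' (c - A.w u u')) + 1)
  refine ⟨fun hp' => absurd hp' hp, fun _ u' hE => ?_⟩
  rcases le_or_gt c (A.w u u') with hle | hlt
  · exact Or.inl hle
  · right
    obtain ⟨t, ht⟩ := hno u' hE hlt
    exact win_mono (Finset.le_sup (f := fun u'' : V => minWin A u'' (c - A.w u u''))
      (Finset.mem_univ u')) (minWin_spec ⟨t, ht⟩)

/-- Adversarial successor choice. -/
noncomputable def badnext [Fintype V] (A : ArenaZ V) (σ : A.Strategy)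
    (h : List V) (u : V) (c : ℤ) : V :=
  if u ∈ A.P1 then σ.act h u
  else if hx : ∃ u', A.E u u' ∧ A.w u u' < c ∧ ∀ t, ¬ Win A t (c - A.w u u') u' then
    hx.choose
  else (A.nodeadlock u).choose

/-- The adversarial play (history, current vertex, current debt). -/
noncomputable def bad [Fintype V] (A : ArenaZ V) (σ : A.Strategy) (v : V) : ℕ → List V × V × ℤ
  | 0 => ([], v, 0)
  | n + 1 =>
      let q := bad A σ v n
      let u' := badnext A σ q.1 q.2.1 q.2.2
      (q.1 ++ [q.2.1], u', q.2.2 - A.w q.2.1 u')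

theorem sure_bwmp_to_win [Fintype V] {A : ArenaZ V} {v : V}
    (h : A.SureWins {π : ℕ → V | A.DirBWMP 0 π} v) : ∃ t, Win A t 0 v := by
  by_contra hnw
  push_neg at hnw
  obtain ⟨σ, hσ⟩ := h
  set Q : ℕ → List V × V × ℤ := bad A σ v with hQ
  set π : ℕ → V := fun n => (Q n).2.1 with hπ
  have hq1 : ∀ n, (Q (n + 1)).1 = (Q n).1 ++ [(Q n).2.1] := fun n => rfl
  have hq2 : ∀ n, (Q (n + 1)).2.1 = badnext A σ (Q n).1 (Q n).2.1 (Q n).2.2 := fun n => rfl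
  have hq3 : ∀ n, (Q (n + 1)).2.2 = (Q n).2.2 - A.w (Q n).2.1 (Q (n + 1)).2.1 := fun n => rfl
  have step : ∀ n, (∀ t, ¬ Win A t (Q n).2.2 (Q n).2.1) →
      A.E (Q n).2.1 (Q (n + 1)).2.1 ∧ A.w (Q n).2.1 (Q (n + 1)).2.1 < (Q n).2.2 ∧
        (∀ t, ¬ Win A t ((Q n).2.2 - A.w (Q n).2.1 (Q (n + 1)).2.1) (Q (n + 1)).2.1) ∧
        ((Q n).2.1 ∈ A.P1 → (Q (n + 1)).2.1 = σ.act (Q n).1 (Q n).2.1) := by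
    intro n hn
    rw [hq2 n]
    by_cases hp : (Q n).2.1 ∈ A.P1
    · rw [badnext, if_pos hp]
      have hl := σ.legal (Q n).1 (Q n).2.1 hp
      have := p1_step hp hn hl
      exact ⟨hl, this.1, this.2, fun _ => rfl⟩
    · rw [badnext, if_neg hp]
      have hx := adv_step hp hn
      rw [dif_pos hx]
      obtain ⟨hE, hw, hnw'⟩ := hx.choose_spec
      exact ⟨hE, hw, hnw', fun hp' => absurd hp' hp⟩
  have inv : ∀ n, ∀ t, ¬ Win A t (Q n).2.2 (Q n).2.1 := by
    intro n
    induction n with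
    | zero => exact hnw
    | succ n ih =>
      have := (step n ih).2.2.1
      rw [hq3 n]
      exact this
  have hhist : ∀ n, (Q n).1 = List.ofFn (fun i : Fin n => π i) := by
    intro n
    induction n with
    | zero => rfl
    | succ n ih =>
      rw [hq1 n, ih, List.ofFn_succ']
      simp [Fin.castSucc, hπ]
  have hout : A.IsOutcome σ v π := by
    refine ⟨rfl, fun n => (step n (inv n)).1, fun n hp => ?_⟩
    rw [← hhist n]
    exact (step n (inv n)).2.2.2 hp
  have hsum : ∀ d, A.winSum π 0 d = -(Q d).2.2 := by
    intro d
    induction d with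
    | zero => simp [ArenaZ.winSum]; rfl
    | succ d ih =>
      rw [ArenaZ.winSum, Finset.sum_range_succ, ← ArenaZ.winSum, ih, hq3 d]
      simp only [hπ, Nat.zero_add]
      ring
  have hpos : ∀ d, 0 < (Q (d + 1)).2.2 := by
    intro d
    rw [hq3 d]
    have := (step d (inv d)).2.1
    omega
  obtain ⟨ℓ, hℓ, hF⟩ := hσ π hout
  obtain ⟨d, hd1, hdℓ, hs⟩ := hF 0
  rw [hsum d] at hs
  obtain ⟨d', rfl⟩ : ∃ d', d = d' + 1 := ⟨d - 1, by omega⟩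
  have := hpos d'
  simp at hs
  omega

end WindowAux
namespace WindowAux

variable {V : Type*}

/-- State update: current debt and window age; reset when the window closes. -/
def stStep : ℤ × ℕ → ℤ → ℤ × ℕ := fun p x => if p.1 ≤ x then (0, 0) else (p.1 - x, p.2 + 1)

/-- State computed from a history `l` and current vertex `v`. -/
def stOf (A : ArenaZ V) (l : List V) (v : V) : ℤ × ℕ :=
  (List.zipWith A.w (l ++ [v]) (l ++ [v]).tail).foldl stStep (0, 0)

theorem zip_concat (A : ArenaZ V) :
    ∀ (l : List V) (hl : l ≠ []) (u : V),
      List.zipWith A.w (l ++ [u]) ((l ++ [u]).tail) =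
        List.zipWith A.w l l.tail ++ [A.w (l.getLast hl) u] := by
  intro l
  induction l with
  | nil => intro hl; exact absurd rfl hl
  | cons a l ih =>
    intro _ u
    cases l with
    | nil => simp
    | cons b l =>
      have := ih (List.cons_ne_nil b l) u
      simp only [List.cons_append, List.tail_cons, List.zipWith_cons_cons] at this ⊢
      rw [this, List.getLast_cons (List.cons_ne_nil b l)]

theorem winSum_add (A : ArenaZ V) (π : ℕ → V) (r a b : ℕ) :
    A.winSum π r (a + b) = A.winSum π r a + A.winSum π (r + a) b := by
  induction b with
  | zero => simp [ArenaZ.winSum]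
  | succ b ih =>
    have e1 : A.winSum π r (a + (b + 1)) =
        A.winSum π r (a + b) + A.w (π (r + (a + b))) (π (r + (a + b) + 1)) := by
      rw [show a + (b + 1) = (a + b) + 1 from rfl, ArenaZ.winSum, Finset.sum_range_succ]
      rfl
    have e2 : A.winSum π (r + a) (b + 1) =
        A.winSum π (r + a) b + A.w (π (r + a + b)) (π (r + a + b + 1)) := by
      rw [ArenaZ.winSum, Finset.sum_range_succ]
      rfl
    rw [e1, e2, ih, show r + (a + b) = r + a + b from by omega]
    ring

/-- The combined strategy: always try to close the current window within the
remaining budget. -/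
noncomputable def goodStrat (A : ArenaZ V) (N : ℕ) : A.Strategy where
  act := fun h v =>
    if hw : ∃ u, A.E v u ∧ ((stOf A h v).1 ≤ A.w v u ∨
        Win A (N - (stOf A h v).2 - 1) ((stOf A h v).1 - A.w v u) u) then hw.choose
    else (A.nodeadlock v).choose
  legal := fun h v _ => by
    split
    · next hw => exact hw.choose_spec.1
    · exact (A.nodeadlock v).choose_spec

theorem win_to_sure_fwmp {A : ArenaZ V} {N : ℕ} (hN : 1 ≤ N)
    (hall : ∀ v, Win A N 0 v) (v : V) :
    A.SureWins {π : ℕ → V | A.DirFWMP N 0 π} v := by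
  refine ⟨goodStrat A N, fun π hout => ?_⟩
  obtain ⟨h0, hplay, hact⟩ := hout
  set D : ℕ → ℤ × ℕ := fun n => stOf A (List.ofFn fun i : Fin n => π i) (π n) with hD
  have hD0 : D 0 = (0, 0) := by
    simp [hD, stOf]
  have hofn : ∀ m : ℕ, (List.ofFn fun i : Fin (m + 1) => π i) =
      (List.ofFn fun i : Fin m => π i) ++ [π m] := by
    intro m
    rw [List.ofFn_succ']
    simp [List.concat_eq_append]
  have hDsucc : ∀ n, D (n + 1) = stStep (D n) (A.w (π n) (π (n + 1))) := by
    intro n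
    have hne : (List.ofFn fun i : Fin n => π i) ++ [π n] ≠ [] := by simp
    have hlast : ((List.ofFn fun i : Fin n => π i) ++ [π n]).getLast hne = π n :=
      List.getLast_append _
    simp only [hD, stOf, hofn n]
    rw [zip_concat A _ hne (π (n + 1)), List.foldl_append, hlast]
    rfl
  -- recurrences for the window-age component
  have krec : ∀ m, ((D m).1 ≤ A.w (π m) (π (m + 1)) ∧ D (m + 1) = (0, 0)) ∨
      (¬ (D m).1 ≤ A.w (π m) (π (m + 1)) ∧
        D (m + 1) = ((D m).1 - A.w (π m) (π (m + 1)), (D m).2 + 1)) := by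
    intro m
    by_cases hle : (D m).1 ≤ A.w (π m) (π (m + 1))
    · exact Or.inl ⟨hle, by rw [hDsucc m, stStep]; simp [hle]⟩
    · exact Or.inr ⟨hle, by rw [hDsucc m, stStep]; simp [hle]⟩
  -- main invariant
  have inv : ∀ n, Win A (N - (D n).2) (D n).1 (π n) ∧ (D n).2 < N := by
    intro n
    induction n with
    | zero =>
      rw [hD0]
      exact ⟨by simpa using hall (π 0), by show 0 < N; omega⟩
    | succ n ih =>
      obtain ⟨hw, hk⟩ := ih
      obtain ⟨m, hm⟩ : ∃ m, N - (D n).2 = m + 1 := ⟨N - (D n).2 - 1, by omega⟩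
      have hw' : Win A (m + 1) (D n).1 (π n) := hm ▸ hw
      rcases krec n with ⟨hle, hD'⟩ | ⟨hle, hD'⟩
      · rw [hD']
        exact ⟨by simpa using hall (π (n + 1)), by show 0 < N; omega⟩
      · have hwin : Win A m ((D n).1 - A.w (π n) (π (n + 1))) (π (n + 1)) := by
          by_cases hp : π n ∈ A.P1
          · -- Player 1 moved according to the strategy
            have hactn := hact n hp
            have hfold : stOf A (List.ofFn fun i : Fin n => π i) (π n) = D n := rfl
            have hcond : ∃ u, A.E (π n) u ∧ ((D n).1 ≤ A.w (π n) u ∨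
                Win A (N - (D n).2 - 1) ((D n).1 - A.w (π n) u) u) := by
              obtain ⟨u, hE, hor⟩ := hw'.1 hp
              exact ⟨u, hE, by rwa [show N - (D n).2 - 1 = m from by omega]⟩
            simp only [goodStrat, hfold] at hactn
            rw [dif_pos hcond] at hactn
            have hspec := hcond.choose_spec
            rw [← hactn] at hspec
            rcases hspec.2 with h1 | h1
            · exact absurd h1 hle
            · rwa [show N - (D n).2 - 1 = m from by omega] at h1
          · rcases hw'.2 hp (π (n + 1)) (hplay n) with h1 | h1
            · exact absurd h1 hle
            · exact h1
        rw [hD']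
        have hmpos := win_pos hwin
        exact ⟨by rwa [show N - ((D n).2 + 1) = m from by omega], by omega⟩
  -- anchor facts
  have anchor : ∀ n, (D n).2 ≤ n ∧ (D n).1 = - A.winSum π (n - (D n).2) (D n).2 ∧
      0 ≤ (D n).1 := by
    intro n
    induction n with
    | zero => rw [hD0]; simp [ArenaZ.winSum]
    | succ n ih =>
      obtain ⟨hkn, hcn, hcpos⟩ := ih
      rcases krec n with ⟨hle, hD'⟩ | ⟨hle, hD'⟩
      · rw [hD']; simp [ArenaZ.winSum]
      · rw [hD']
        refine ⟨by simp; omega, ?_, by simp; omega⟩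
        have hanch : n + 1 - ((D n).2 + 1) = n - (D n).2 := by omega
        simp only [hanch]
        rw [ArenaZ.winSum, Finset.sum_range_succ, ← ArenaZ.winSum,
          show n - (D n).2 + (D n).2 = n from by omega]
        omega
  -- conclude DirFWMP
  intro i
  have hex : ∃ s, 1 ≤ s ∧ (D (i + s)).2 = 0 := by
    by_contra hno
    push_neg at hno
    have grow : ∀ s, 1 ≤ s → (D (i + s)).2 = (D i).2 + s := by
      intro s
      induction s with
      | zero => omega
      | succ s ih =>
        intro _
        rcases krec (i + s) with ⟨_, hD'⟩ | ⟨_, hD'⟩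
        · exact absurd (by rw [show i + (s+1) = (i+s) + 1 from rfl, hD']) (hno (s + 1) (by omega))
        · rcases Nat.eq_zero_or_pos s with rfl | hs
          · rw [show i + (0+1) = (i+0) + 1 from rfl, hD']
            simp
          · rw [show i + (s+1) = (i+s) + 1 from rfl, hD']
            simp [ih hs]
            omega
    have := grow N hN
    have := (inv (i + N)).2
    omega
  set s := Nat.find hex with hs
  obtain ⟨hs1, hs0⟩ := Nat.find_spec hex
  have hmin : ∀ j, 1 ≤ j → j < s → (D (i + j)).2 ≠ 0 := by
    intro j hj1 hjs hj0
    exact Nat.find_min hex hjs ⟨hj1, hj0⟩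
  have mid : ∀ j, j < s → (D (i + j)).2 = (D i).2 + j := by
    intro j
    induction j with
    | zero => simp
    | succ j ih =>
      intro hjs
      rcases krec (i + j) with ⟨_, hD'⟩ | ⟨_, hD'⟩
      · exact absurd (by rw [show i + (j+1) = (i+j) + 1 from rfl, hD']) (hmin (j+1) (by omega) hjs)
      · rw [show i + (j+1) = (i+j) + 1 from rfl, hD']
        simp [ih (by omega)]
        omega
  have hsN : s ≤ N := by
    have h1 := mid (s - 1) (by omega)
    have h2 := (inv (i + (s - 1))).2
    omega
  refine ⟨s, hs1, hsN, ?_⟩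
  -- the last step closes the window anchored at r = i - (D i).2
  have hm1 : i + (s - 1) + 1 = i + s := by omega
  have hclose : (D (i + (s - 1))).1 ≤ A.w (π (i + (s - 1))) (π (i + (s - 1) + 1)) := by
    rcases krec (i + (s - 1)) with ⟨hle, _⟩ | ⟨_, hD'⟩
    · exact hle
    · exfalso
      rw [hm1] at hD'
      rw [hD'] at hs0
      simp at hs0
  obtain ⟨hki, hci, hcpi⟩ := anchor i
  obtain ⟨hkm, hcm, _⟩ := anchor (i + (s - 1))
  have hkmid := mid (s - 1) (by omega)
  -- winSum from anchor r over (D i).2 + s is ≥ 0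
  rw [hkmid] at hcm
  have hr : i + (s - 1) - ((D i).2 + (s - 1)) = i - (D i).2 := by omega
  rw [hr] at hcm
  have hrks : i - (D i).2 + ((D i).2 + (s - 1)) = i + (s - 1) := by omega
  have htot : 0 ≤ A.winSum π (i - (D i).2) ((D i).2 + (s - 1) + 1) := by
    rw [ArenaZ.winSum, Finset.sum_range_succ, ← ArenaZ.winSum, hrks]
    omega
  have hsplit := winSum_add A π (i - (D i).2) ((D i).2) s
  rw [show i - (D i).2 + (D i).2 = i from by omega] at hsplit
  have hsm : (D i).2 + (s - 1) + 1 = (D i).2 + s := by omega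
  rw [hsm] at htot
  rw [hsplit] at htot
  have : 0 ≤ A.winSum π i s := by omega
  simpa using this

end WindowAux
/-- With `w_max` the maximum absolute payoff and `ℓ' = |V|·(|V|·w_max + 1)`,
every vertex is sure-winning for `DirBWMP(0)` if and only if every vertex is
sure-winning for `DirFWMP(ℓ', 0)`. -/
theorem all_sure_dirbwmp_iff_all_sure_dirfwmp
    {V : Type*} [Fintype V] [Nonempty V] (A : ArenaZ V) :
    (∀ v : V, A.SureWins {π : ℕ → V | A.DirBWMP 0 π} v) ↔
    (∀ v : V, A.SureWins
      {π : ℕ → V | A.DirFWMP (Fintype.card V * (Fintype.card V * A.maxDev 0 + 1)) 0 π} v) := by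
  have hN : 1 ≤ Fintype.card V * (Fintype.card V * A.maxDev 0 + 1) :=
    Nat.one_le_iff_ne_zero.mpr (Nat.mul_ne_zero (Nat.pos_iff_ne_zero.mp Fintype.card_pos)
      (Nat.succ_ne_zero _))
  constructor
  · intro h
    have hwin : ∀ v, WindowAux.Win A (Fintype.card V * (Fintype.card V * A.maxDev 0 + 1)) 0 v :=
      fun v => WindowAux.win_bound A (WindowAux.sure_bwmp_to_win (h v))
    exact WindowAux.win_to_sure_fwmp hN hwin
  · intro h v
    obtain ⟨σ, hσ⟩ := h v
    exact ⟨σ, fun π hout => ⟨_, hN, hσ π hout⟩⟩
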